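/- Let 0 < μ < 1, η, γ > 0, and let (G_r)_{r=0}^{R−1} be arbitrary vectors in ℝ^d. Define the momentum iteration x_{r+1} = x_r − ηγ G_r + μ(x_r − x_{r−1}) with x₀ = x_{−1}. Then x_r − x_{r−1} = −ηγ Σ_{s=0}^{r−1} μ^{r−1−s} G_s for all r ≥ 1, and Σ_{r=0}^{R−1} ⟨x_{r−1} − x_r, G_r⟩ ≤ (ηγ/(1−μ)) Σ_{r=0}^{R−1} ‖G_r‖². -/

import Mathlib

open scoped RealInnerProductSpace

/-- Heavy-ball displacement formula and cumulative momentum cross-term bound: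
for `x_{r+1} = x_r − ηγ G_r + μ(x_r − x_{r−1})` with `x₀ = x_{−1}` (encoded via truncated
subtraction on `ℕ`), we have `x_r − x_{r−1} = −ηγ Σ_{s<r} μ^{r−1−s} G_s` and
`Σ_{r<R} ⟨x_{r−1} − x_r, G_r⟩ ≤ (ηγ/(1−μ)) Σ_{r<R} ‖G_r‖²`. -/
theorem momentum_displacement_bound
    {d : ℕ} (μ η γ : ℝ) (hμ0 : 0 < μ) (hμ1 : μ < 1) (hη : 0 < η) (hγ : 0 < γ)
    (R : ℕ)
    (G x : ℕ → EuclideanSpace ℝ (Fin d))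
    (hrec : ∀ r : ℕ, x (r + 1) = x r - (η * γ) • G r + μ • (x r - x (r - 1))) :
    (∀ r : ℕ, 1 ≤ r →
      x r - x (r - 1) = (-(η * γ)) • ∑ s ∈ Finset.range r, μ ^ (r - 1 - s) • G s) ∧
    ∑ r ∈ Finset.range R, ⟪x (r - 1) - x r, G r⟫
      ≤ (η * γ / (1 - μ)) * ∑ r ∈ Finset.range R, ‖G r‖ ^ 2 := by
  have hc : 0 < η * γ := mul_pos hη hγ
  have h1μ : 0 < 1 - μ := by linarith
  -- displacement formula, induction form
  have key : ∀ r : ℕ, x (r + 1) - x r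
      = (-(η * γ)) • ∑ s ∈ Finset.range (r + 1), μ ^ (r - s) • G s := by
    intro r
    induction r with
    | zero =>
        have h := hrec 0
        simp only [Nat.zero_sub, sub_self, smul_zero, add_zero] at h
        rw [h]
        simp
    | succ k ih =>
        have h := hrec (k + 1)
        have hk : (k + 1) - 1 = k := rfl
        rw [hk] at h
        have hsum : ∑ s ∈ Finset.range (k + 2), μ ^ (k + 1 - s) • G s
            = μ • (∑ s ∈ Finset.range (k + 1), μ ^ (k - s) • G s) + G (k + 1) := by
          rw [Finset.sum_range_succ, Finset.smul_sum]
          congr 1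
          · refine Finset.sum_congr rfl fun s hs => ?_
            have hsk : s ≤ k := Nat.lt_succ_iff.mp (Finset.mem_range.mp hs)
            rw [smul_smul, Nat.succ_sub hsk, pow_succ, mul_comm]
          · simp
        rw [hsum, h, ih]
        module
  -- per-step formula including r = 0
  have form : ∀ r : ℕ, x (r - 1) - x r
      = (η * γ) • ∑ s ∈ Finset.range r, μ ^ (r - 1 - s) • G s := by
    intro r
    match r with
    | 0 => simp
    | (k + 1) =>
        have := key k
        have hk : (k + 1) - 1 = k := rfl
        rw [hk, ← neg_sub, this]
        simp
  constructor
  · intro r hr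
    rw [← neg_sub, form r, neg_smul]
  · -- geometric sum bounds
    have geom : ∀ n : ℕ, ∑ k ∈ Finset.range n, μ ^ k ≤ 1 / (1 - μ) := by
      intro n
      rw [le_div_iff₀ h1μ]
      have h := geom_sum_mul μ n
      nlinarith [pow_nonneg hμ0.le n]
    set a : ℕ → ℝ := fun r => ‖G r‖ ^ 2 with ha
    have ha0 : ∀ r, 0 ≤ a r := fun r => by positivity
    set T : ℝ := ∑ r ∈ Finset.range R, a r with hT
    have hT0 : 0 ≤ T := Finset.sum_nonneg fun r _ => ha0 r
    -- termwise bound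
    have step : ∀ r : ℕ, ⟪x (r - 1) - x r, G r⟫
        ≤ (η * γ) * ∑ s ∈ Finset.range r, μ ^ (r - 1 - s) * ((a s + a r) / 2) := by
      intro r
      rw [form r, real_inner_smul_left, sum_inner]
      refine mul_le_mul_of_nonneg_left (Finset.sum_le_sum fun s _ => ?_) (le_of_lt hc)
      rw [real_inner_smul_left]
      refine mul_le_mul_of_nonneg_left ?_ (by positivity)
      calc ⟪G s, G r⟫ ≤ ‖G s‖ * ‖G r‖ := real_inner_le_norm _ _
        _ ≤ (a s + a r) / 2 := by
            have := sq_nonneg (‖G s‖ - ‖G r‖)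
            simp only [ha]; nlinarith
    have hA : (∑ r ∈ Finset.range R, ∑ s ∈ Finset.range r, μ ^ (r - 1 - s) * a s)
        ≤ (1 / (1 - μ)) * T := by
      have hswap : (∑ r ∈ Finset.range R, ∑ s ∈ Finset.range r, μ ^ (r - 1 - s) * a s)
          = ∑ s ∈ Finset.range R, ∑ r ∈ Finset.Ico (s + 1) R, μ ^ (r - 1 - s) * a s := by
        simp_rw [← Nat.Ico_zero_eq_range]
        rw [← Finset.sum_Ico_Ico_comm' 0 R fun s r => μ ^ (r - 1 - s) * a s]
      rw [hswap, hT, Finset.mul_sum]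
      refine Finset.sum_le_sum fun s _ => ?_
      rw [← Finset.sum_mul, mul_comm (1 / (1 - μ)), mul_comm _ (a s)]
      refine mul_le_mul_of_nonneg_left ?_ (ha0 s)
      rw [Finset.sum_Ico_eq_sum_range]
      calc ∑ k ∈ Finset.range (R - (s + 1)), μ ^ (s + 1 + k - 1 - s)
          = ∑ k ∈ Finset.range (R - (s + 1)), μ ^ k :=
            Finset.sum_congr rfl fun k _ => by congr 1; omega
        _ ≤ 1 / (1 - μ) := geom _
    have hB : (∑ r ∈ Finset.range R, a r * ∑ s ∈ Finset.range r, μ ^ (r - 1 - s))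
        ≤ T * (1 / (1 - μ)) := by
      rw [hT, Finset.sum_mul]
      refine Finset.sum_le_sum fun r _ => ?_
      refine mul_le_mul_of_nonneg_left ?_ (ha0 r)
      calc ∑ s ∈ Finset.range r, μ ^ (r - 1 - s)
          = ∑ s ∈ Finset.range r, μ ^ s := Finset.sum_range_reflect (fun k => μ ^ k) r
        _ ≤ 1 / (1 - μ) := geom _
    calc ∑ r ∈ Finset.range R, ⟪x (r - 1) - x r, G r⟫
        ≤ ∑ r ∈ Finset.range R,
            (η * γ) * ∑ s ∈ Finset.range r, μ ^ (r - 1 - s) * ((a s + a r) / 2) :=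
          Finset.sum_le_sum fun r _ => step r
      _ = (η * γ) * ((∑ r ∈ Finset.range R, ∑ s ∈ Finset.range r, μ ^ (r - 1 - s) * a s) / 2
            + (∑ r ∈ Finset.range R, a r * ∑ s ∈ Finset.range r, μ ^ (r - 1 - s)) / 2) := by
          rw [← Finset.mul_sum]
          congr 1
          rw [Finset.sum_div, Finset.sum_div, ← Finset.sum_add_distrib]
          refine Finset.sum_congr rfl fun r _ => ?_
          rw [Finset.sum_div, Finset.mul_sum, Finset.sum_div, ← Finset.sum_add_distrib]
          exact Finset.sum_congr rfl fun s _ => by ring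
      _ ≤ (η * γ) * ((1 / (1 - μ) * T) / 2 + (T * (1 / (1 - μ))) / 2) := by
          gcongr
      _ = (η * γ / (1 - μ)) * T := by field_simp; ring
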